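/- Every non-integral point P of the demihypercube DH(m) (m ≥ 3) has at least two non-integral coordinates. -/

import Mathlib

open Finset

/-- Membership in the demihypercube `DH(m)` (H-representation). -/
def inDH (m : ℕ) (p : Fin m → ℝ) : Prop :=
  (∀ k, p k ∈ Set.Icc (0:ℝ) 1) ∧
  ∀ A : Finset (Fin m), Odd A.card →
    ∑ j ∈ A, p j ≤ (A.card : ℝ) - 1 + ∑ j ∈ Aᶜ, p j

/-- The point `p` lies on the facet hyperplane `H_A`. -/
def onFacet (m : ℕ) (p : Fin m → ℝ) (A : Finset (Fin m)) : Prop :=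
  ∑ j ∈ A, p j = (A.card : ℝ) - 1 + ∑ j ∈ Aᶜ, p j

/-- Every non-integral point of `DH(m)` (`m ≥ 3`) has at least two non-integral
coordinates. -/
theorem two_nonintegral_coords (m : ℕ) (hm : 3 ≤ m) (p : Fin m → ℝ)
    (hp : inDH m p) (hni : ∃ k, p k ≠ 0 ∧ p k ≠ 1) :
    ∃ i j : Fin m, i ≠ j ∧ (p i ≠ 0 ∧ p i ≠ 1) ∧ (p j ≠ 0 ∧ p j ≠ 1) := by
  by_contra hcon
  push_neg at hcon
  obtain ⟨k, hk0, hk1⟩ := hni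
  have hint : ∀ j, j ≠ k → p j = 0 ∨ p j = 1 := by
    intro j hj
    have := hcon k j (Ne.symm hj) ⟨hk0, hk1⟩
    tauto
  set O := Finset.univ.filter (fun i => p i = 1) with hO
  have hkO : k ∉ O := by simp [hO, hk1]
  have hsumO : ∑ j ∈ O, p j = O.card := by
    rw [Finset.sum_congr rfl (fun j hj => (Finset.mem_filter.mp hj).2)]
    simp
    rfl
  have hzero : ∀ j, j ∉ O → j ≠ k → p j = 0 := by
    intro j hjO hjk
    rcases hint j hjk with h | h
    · exact h
    · exact absurd (by simp [hO, h]) hjO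
  have hk01 := hp.1 k
  rcases Nat.even_or_odd O.card with he | ho
  · have hcard : (insert k O).card = O.card + 1 := Finset.card_insert_of_notMem hkO
    have hodd : Odd (insert k O).card := by rw [hcard]; exact Even.add_one he
    have hle := hp.2 (insert k O) hodd
    have hsumA : ∑ j ∈ insert k O, p j = p k + O.card := by
      rw [Finset.sum_insert hkO, hsumO]
    have hsumC : ∑ j ∈ (insert k O)ᶜ, p j = 0 := by
      apply Finset.sum_eq_zero
      intro j hj
      simp only [Finset.mem_compl, Finset.mem_insert, not_or] at hj
      exact hzero j hj.2 hj.1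
    rw [hsumA, hsumC, hcard] at hle
    push_cast at hle
    have : p k ≤ 0 := by linarith
    exact hk0 (le_antisymm this hk01.1)
  · have hle := hp.2 O ho
    have hsumC : ∑ j ∈ Oᶜ, p j = p k := by
      have hkC : k ∈ Oᶜ := Finset.mem_compl.mpr hkO
      rw [← Finset.add_sum_erase _ _ hkC]
      have hz : ∑ j ∈ Oᶜ.erase k, p j = 0 := Finset.sum_eq_zero (fun j hj => by
        have hj' := Finset.mem_erase.mp hj
        exact hzero j (Finset.mem_compl.mp hj'.2) hj'.1)
      rw [hz]; ring
    rw [hsumO, hsumC] at hle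
    have h1 : (1:ℝ) ≤ p k := by linarith
    exact hk1 (le_antisymm hk01.2 h1)
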